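/- Let D be a domain and f, g ∈ D nonzero. Then p_g ⊆ p_f if and only if there exists e ≥ 1 with 1/g^e ∈ (1/f)·R(D), i.e. f/g^e ∈ R(D). -/

import Mathlib

noncomputable def recip (D : Type*) [CommRing D] [IsDomain D] : Subring (FractionRing D) :=
  Subring.closure {x | ∃ d : D, d ≠ 0 ∧ x = (algebraMap D (FractionRing D) d)⁻¹}

/-- `p` is the prime ideal `p_x` of `R(D)`: the unique prime maximal with respect to
not containing `1/x`. -/
def IsPx {D : Type*} [CommRing D] [IsDomain D] (x : D) (hx : x ≠ 0)
    (p : Ideal (recip D)) : Prop :=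
  p.IsPrime ∧
  (⟨(algebraMap D (FractionRing D) x)⁻¹,
    Subring.subset_closure ⟨x, hx, rfl⟩⟩ : recip D) ∉ p ∧
  ∀ q : Ideal (recip D), q.IsPrime →
    (⟨(algebraMap D (FractionRing D) x)⁻¹,
      Subring.subset_closure ⟨x, hx, rfl⟩⟩ : recip D) ∉ q → q ≤ p

/-- If `p` is prime, `u ∉ p`, and every prime avoiding `u` is contained in `p`,
then any `r ∉ p` divides some power of `u`. -/
lemma aux_dvd_pow {R : Type*} [CommRing R] (p : Ideal R) (hp : p.IsPrime)
    (u : R) (hmax : ∀ q : Ideal R, q.IsPrime → u ∉ q → q ≤ p)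
    (r : R) (hr : r ∉ p) : ∃ n : ℕ, r ∣ u ^ n := by
  by_contra h
  push_neg at h
  have hrad : u ∉ (Ideal.span {r}).radical := by
    rw [Ideal.mem_radical_iff]
    push_neg
    intro n
    rw [Ideal.mem_span_singleton]
    exact h n
  rw [Ideal.radical_eq_sInf, Ideal.mem_sInf] at hrad
  push_neg at hrad
  obtain ⟨q, ⟨hle, hq⟩, hq2⟩ := hrad
  exact hr (hmax q hq hq2 (hle (Ideal.mem_span_singleton_self r)))

/-- For nonzero `f, g ∈ D`, we have `p_g ⊆ p_f` iff there is `e ≥ 1`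
with `f/gᵉ ∈ R(D)` (equivalently, `1/gᵉ ∈ (1/f)·R(D)`). -/
theorem stmt_13 {D : Type*} [CommRing D] [IsDomain D]
    (f g : D) (hf : f ≠ 0) (hg : g ≠ 0)
    (pf pg : Ideal (recip D)) (hpf : IsPx f hf pf) (hpg : IsPx g hg pg) :
    pg ≤ pf ↔ ∃ e : ℕ, 1 ≤ e ∧
      algebraMap D (FractionRing D) f * (algebraMap D (FractionRing D) g ^ e)⁻¹ ∈
        recip D := by
  set K := FractionRing D
  have hf' : algebraMap D K f ≠ 0 :=
    fun h => hf ((map_eq_zero_iff _ (IsFractionRing.injective D K)).mp h)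
  have hg' : algebraMap D K g ≠ 0 :=
    fun h => hg ((map_eq_zero_iff _ (IsFractionRing.injective D K)).mp h)
  set u : recip D := ⟨(algebraMap D K f)⁻¹, Subring.subset_closure ⟨f, hf, rfl⟩⟩ with hu
  set v : recip D := ⟨(algebraMap D K g)⁻¹, Subring.subset_closure ⟨g, hg, rfl⟩⟩ with hv
  obtain ⟨hpf1, hpf2, hpf3⟩ := hpf
  obtain ⟨hpg1, hpg2, hpg3⟩ := hpg
  constructor
  · intro hle
    have hunotg : u ∉ pg := fun h => hpf2 (hle h)
    obtain ⟨n, c, hc⟩ := aux_dvd_pow pg hpg1 v hpg3 u hunotg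
    refine ⟨n + 1, Nat.le_add_left 1 n, ?_⟩
    have : algebraMap D K f * (algebraMap D K g ^ (n + 1))⁻¹ = (c * v).1 := by
      have hval : (v ^ n).1 = (u * c).1 := by rw [hc]
      push_cast at hval
      simp only [hu, hv] at hval ⊢
      field_simp at hval ⊢
      rw [pow_succ]
      ring_nf
      ring_nf at hval
      rw [show ((c * _ : recip D) : K) = (c : K) * (algebraMap D K g)⁻¹ from rfl, ← hval]
      ring
    rw [this]
    exact (c * v).2
  · rintro ⟨e, he, ht⟩
    set t : recip D := ⟨algebraMap D K f * (algebraMap D K g ^ e)⁻¹, ht⟩ with htdef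
    have hkey : v ^ e = u * t := by
      apply Subtype.ext
      push_cast
      show (algebraMap D K g)⁻¹ ^ e = (algebraMap D K f)⁻¹ * (algebraMap D K f * (algebraMap D K g ^ e)⁻¹)
      rw [inv_pow, ← mul_assoc, inv_mul_cancel₀ hf', one_mul]
    intro x hx
    by_contra hxf
    obtain ⟨n, c, hc⟩ := aux_dvd_pow pf hpf1 u hpf3 x hxf
    rcases Nat.eq_zero_or_pos n with hn | hn
    · subst hn
      rw [pow_zero] at hc
      exact hpg1.ne_top (Ideal.eq_top_of_isUnit_mem pg hx ⟨⟨x, c, hc.symm, by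
        rw [mul_comm] at hc; exact hc.symm⟩, rfl⟩)
    · have hmem : v ^ (e * n) ∈ pg := by
        have : v ^ (e * n) = x * (c * t ^ n) := by
          rw [pow_mul, hkey, mul_pow, hc]
          ring
        rw [this]
        exact Ideal.mul_mem_right _ _ hx
      have := hpg1.mem_of_pow_mem _ hmem
      exact hpg2 this
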